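/- In a connected graph G, for every k∈ℕ and every pair of distinct vertices u,v, there are only finitely many vertex sets S of size k such that S separates u and v properly, i.e., u and v lie in distinct components of G−S and each of those two components is adjacent to every vertex of S. -/

import Mathlib

/-- `u` and `v` lie in the same component of `G − S`: there is a walk from `u`
to `v` avoiding `S`. -/
def ConnAvoiding {V : Type*} (G : SimpleGraph V) (S : Set V) (u v : V) : Prop :=
  ∃ p : G.Walk u v, ∀ x ∈ p.support, x ∉ S

/-- `S` separates `u` and `v` properly: `u, v ∉ S`, they lie in distinct
components of `G − S`, and each of these two components is adjacent to every
vertex of `S`. -/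
def SeparatesProperly {V : Type*} (G : SimpleGraph V) (S : Set V) (u v : V) : Prop :=
  u ∉ S ∧ v ∉ S ∧ ¬ ConnAvoiding G S u v ∧
  (∀ s ∈ S, ∃ w, w ∉ S ∧ G.Adj s w ∧ ConnAvoiding G S u w) ∧
  (∀ s ∈ S, ∃ w, w ∉ S ∧ G.Adj s w ∧ ConnAvoiding G S v w)

namespace Stmt11Aux

open SimpleGraph

variable {V : Type*}

/-- The graph `H` with all edges at `x` removed. -/
def delv (H : SimpleGraph V) (x : V) : SimpleGraph V where
  Adj a b := H.Adj a b ∧ a ≠ x ∧ b ≠ x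
  symm := ⟨fun a b h => ⟨h.1.symm, h.2.2, h.2.1⟩⟩
  loopless := ⟨fun a h => H.loopless.irrefl a h.1⟩

lemma delv_support_ne {H : SimpleGraph V} {x u w : V} (hu : u ≠ x)
    (q : (delv H x).Walk u w) : ∀ y ∈ q.support, y ≠ x := by
  induction q with
  | nil => intro y hy; simp at hy; subst hy; exact hu
  | cons h q ih =>
    intro y hy
    rw [SimpleGraph.Walk.support_cons] at hy
    rcases List.mem_cons.1 hy with rfl | hy
    · exact hu
    · exact ih h.2.2 y hy

lemma connAvoiding_of_delv {H : SimpleGraph V} {x u w : V} {S : Set V}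
    (hx : x ∈ S) (hu : u ≠ x) (h : ConnAvoiding (delv H x) (S \ {x}) u w) :
    ConnAvoiding H S u w := by
  obtain ⟨q, hq⟩ := h
  have hedges : ∀ e ∈ q.edges, e ∈ H.edgeSet := by
    intro e he
    have := q.edges_subset_edgeSet he
    exact Sym2.ind (fun a b h => h.1) e this
  refine ⟨q.transfer H hedges, ?_⟩
  rw [SimpleGraph.Walk.support_transfer]
  intro y hy
  have hyx := delv_support_ne hu q y hy
  have := hq y hy
  intro hyS
  exact this ⟨hyS, hyx⟩

lemma connAvoiding_delv {H : SimpleGraph V} {x u w : V} {S : Set V}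
    (hx : x ∈ S) (h : ConnAvoiding H S u w) :
    ConnAvoiding (delv H x) (S \ {x}) u w := by
  obtain ⟨p, hp⟩ := h
  have hedges : ∀ e ∈ p.edges, e ∈ (delv H x).edgeSet := by
    intro e he
    induction e with
    | h a b =>
      have hab : H.Adj a b := p.edges_subset_edgeSet he
      have ha : a ∈ p.support := p.fst_mem_support_of_mem_edges he
      have hb : b ∈ p.support := p.snd_mem_support_of_mem_edges he
      refine ⟨hab, fun h' => hp _ ha ?_, fun h' => hp _ hb ?_⟩
      · have hax : a = x := h'
        rw [hax]; exact hx
      · have hbx : b = x := h'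
        rw [hbx]; exact hx
  refine ⟨p.transfer (delv H x) hedges, ?_⟩
  rw [SimpleGraph.Walk.support_transfer]
  intro y hy hyS
  exact hp y hy hyS.1

lemma sep_delv {H : SimpleGraph V} {x u v : V} {S : Set V} (hx : x ∈ S)
    (h : SeparatesProperly H S u v) :
    SeparatesProperly (delv H x) (S \ {x}) u v := by
  obtain ⟨hu, hv, hnc, hA, hB⟩ := h
  have hux : u ≠ x := fun h' => hu (h' ▸ hx)
  have hvx : v ≠ x := fun h' => hv (h' ▸ hx)
  refine ⟨fun h' => hu h'.1, fun h' => hv h'.1, ?_, ?_, ?_⟩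
  · intro hc
    exact hnc (connAvoiding_of_delv hx hux hc)
  · rintro s ⟨hsS, hsx⟩
    obtain ⟨w, hwS, hadj, hcon⟩ := hA s hsS
    exact ⟨w, fun h' => hwS h'.1,
      ⟨hadj, by simpa using hsx, fun h' => hwS (h' ▸ hx)⟩,
      connAvoiding_delv hx hcon⟩
  · rintro s ⟨hsS, hsx⟩
    obtain ⟨w, hwS, hadj, hcon⟩ := hB s hsS
    exact ⟨w, fun h' => hwS h'.1,
      ⟨hadj, by simpa using hsx, fun h' => hwS (h' ▸ hx)⟩,
      connAvoiding_delv hx hcon⟩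

lemma key (k : ℕ) (H : SimpleGraph V) (u v : V) :
    {S : Set V | S.Finite ∧ S.ncard = k ∧ SeparatesProperly H S u v}.Finite := by
  induction k generalizing H with
  | zero =>
    apply Set.Finite.subset (Set.finite_singleton (∅ : Set V))
    rintro S ⟨hfin, hcard, _⟩
    exact (Set.ncard_eq_zero hfin).1 hcard
  | succ n ih =>
    by_cases hr : H.Reachable u v
    · obtain ⟨p⟩ := hr
      apply Set.Finite.subset
        (Set.Finite.biUnion (p.support.finite_toSet)
          (fun x _ => ((ih (delv H x)).image (insert x))))
      rintro S ⟨hfin, hcard, hsep⟩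
      have hex : ∃ x ∈ p.support, x ∈ S := by
        by_contra h
        push_neg at h
        exact hsep.2.2.1 ⟨p, h⟩
      obtain ⟨x, hxp, hxS⟩ := hex
      refine Set.mem_biUnion hxp ⟨S \ {x}, ⟨hfin.diff, ?_, sep_delv hxS hsep⟩, ?_⟩
      · rw [Set.ncard_diff_singleton_of_mem hxS, hcard]; omega
      · rw [Set.insert_diff_singleton, Set.insert_eq_self.2 hxS]
    · apply Set.Finite.subset (Set.finite_singleton (∅ : Set V))
      rintro S ⟨hfin, hcard, hu, hv, hnc, hA, hB⟩
      show S = ∅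
      by_contra hne
      obtain ⟨s, hs⟩ := Set.nonempty_iff_ne_empty.2 hne
      obtain ⟨w, _, hadj, ⟨pw, _⟩⟩ := hA s hs
      obtain ⟨w', _, hadj', ⟨pw', _⟩⟩ := hB s hs
      have h0 : H.Reachable u w := ⟨pw⟩
      have h0' : H.Reachable v w' := ⟨pw'⟩
      have h1 : H.Reachable u s := h0.trans hadj.symm.reachable
      have h2 : H.Reachable v s := h0'.trans hadj'.symm.reachable
      exact hr (h1.trans h2.symm)

end Stmt11Aux

/-- In a connected graph, for every `k` and every pair of distinct
vertices `u, v`, only finitely many vertex sets of size `k` separate `u` and `v`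
properly. -/
theorem stmt_11 {V : Type*} (G : SimpleGraph V) (hconn : G.Connected)
    (k : ℕ) (u v : V) (huv : u ≠ v) :
    {S : Set V | S.Finite ∧ S.ncard = k ∧ SeparatesProperly G S u v}.Finite :=
  Stmt11Aux.key k G u v
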